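/- Fix integers 1 ≤ s < n and real numbers y_1, ..., y_n, and let ȳ = (1/n) Σ_{i=1}^n y_i. Let A be a uniformly random size-s subset of {1, ..., n} (uniform over all C(n,s) such subsets), let μ*(A) = (1/s) Σ_{i ∈ A} y_i and N_i(A) = 1{i ∈ A}. Then the infinitesimal jackknife estimate with finite-sample correction satisfies exactly: ((n−1)/n)·(n/(n−s))² · Σ_{i=1}^n Cov(μ*(A), N_i(A))² = (1/(n(n−1))) Σ_{i=1}^n (y_i − ȳ)², where the covariances are with respect to the random subset A. -/

import Mathlib

open Finset


lemma IJ_count_one {α : Type*} [DecidableEq α] (t : Finset α) (k : ℕ) (a : α) (ha : a ∈ t) :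
    ((powersetCard (k+1) t).filter (fun A => a ∈ A)).card = (t.card - 1).choose k := by
  rw [← card_erase_of_mem ha, ← card_powersetCard k (t.erase a)]
  apply card_nbij' (fun A => A.erase a) (fun B => insert a B)
  · intro A hA
    simp only [mem_coe, mem_filter, mem_powersetCard] at hA
    obtain ⟨⟨hsub, hcard⟩, haA⟩ := hA
    simp only [mem_coe, mem_powersetCard]
    exact ⟨erase_subset_erase a hsub, by rw [card_erase_of_mem haA, hcard]; omega⟩
  · intro B hB
    simp only [mem_coe, mem_powersetCard] at hB
    obtain ⟨hsub, hcard⟩ := hB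
    have haB : a ∉ B := fun h => (notMem_erase a t) (hsub h)
    simp only [mem_coe, mem_filter, mem_powersetCard]
    refine ⟨⟨insert_subset ha (hsub.trans (erase_subset a t)), ?_⟩, mem_insert_self a B⟩
    rw [card_insert_of_notMem haB, hcard]
  · intro A hA
    simp only [mem_coe, mem_filter] at hA
    exact insert_erase hA.2
  · intro B hB
    simp only [mem_coe, mem_powersetCard] at hB
    exact erase_insert (fun h => (notMem_erase a t) (hB.1 h))

lemma IJ_count_two {α : Type*} [DecidableEq α] (t : Finset α) (k : ℕ) (a b : α)
    (ha : a ∈ t) (hb : b ∈ t) (hab : a ≠ b) :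
    ((powersetCard (k+2) t).filter (fun A => a ∈ A ∧ b ∈ A)).card = (t.card - 2).choose k := by
  have hb' : b ∈ t.erase a := mem_erase.2 ⟨fun h => hab h.symm, hb⟩
  have hcard2 : ((t.erase a).erase b).card = t.card - 2 := by
    rw [card_erase_of_mem hb', card_erase_of_mem ha]; omega
  rw [← hcard2, ← card_powersetCard k ((t.erase a).erase b)]
  apply card_nbij' (fun A => (A.erase a).erase b) (fun B => insert a (insert b B))
  · intro A hA
    simp only [mem_coe, mem_filter, mem_powersetCard] at hA
    obtain ⟨⟨hsub, hcard⟩, haA, hbA⟩ := hA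
    have hbA' : b ∈ A.erase a := mem_erase.2 ⟨fun h => hab h.symm, hbA⟩
    simp only [mem_coe, mem_powersetCard]
    refine ⟨erase_subset_erase b (erase_subset_erase a hsub), ?_⟩
    rw [card_erase_of_mem hbA', card_erase_of_mem haA, hcard]; omega
  · intro B hB
    simp only [mem_coe, mem_powersetCard] at hB
    obtain ⟨hsub, hcard⟩ := hB
    have hbB : b ∉ B := fun h => (notMem_erase b _) (hsub h)
    have haB : a ∉ insert b B := by
      simp only [mem_insert]
      rintro (h | h)
      · exact hab h
      · exact (notMem_erase a t) ((erase_subset b _) (hsub h))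
    simp only [mem_coe, mem_filter, mem_powersetCard]
    refine ⟨⟨?_, ?_⟩, mem_insert_self a _, mem_insert_of_mem (mem_insert_self b B)⟩
    · exact insert_subset ha (insert_subset hb
        ((hsub.trans (erase_subset b _)).trans (erase_subset a t)))
    · rw [card_insert_of_notMem haB, card_insert_of_notMem hbB, hcard]
  · intro A hA
    simp only [mem_coe, mem_filter] at hA
    obtain ⟨_, haA, hbA⟩ := hA
    beta_reduce
    rw [insert_erase (mem_erase.2 ⟨fun h => hab h.symm, hbA⟩), insert_erase haA]
  · intro B hB
    simp only [mem_coe, mem_powersetCard] at hB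
    have hbB : b ∉ B := fun h => (notMem_erase b _) (hB.1 h)
    have haB : a ∉ insert b B := by
      simp only [mem_insert]
      rintro (h | h)
      · exact hab h
      · exact (notMem_erase a t) ((erase_subset b _) (hB.1 h))
    beta_reduce
    rw [erase_insert haB, erase_insert hbB]

lemma IJ_count_two_one {α : Type*} [DecidableEq α] (t : Finset α) (a b : α) (hab : a ≠ b) :
    ((powersetCard 1 t).filter (fun A => a ∈ A ∧ b ∈ A)).card = 0 := by
  rw [card_eq_zero]
  apply filter_eq_empty_iff.2
  intro A hA
  simp only [mem_powersetCard, card_eq_one] at hA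
  obtain ⟨-, x, rfl⟩ := hA
  simp only [mem_singleton]
  rintro ⟨rfl, rfl⟩
  exact hab rfl

/-- For trivial trees (subsample means over size-`s` subsets drawn
without replacement), the infinitesimal jackknife with finite-sample correction equals
the standard variance estimator:
`((n−1)/n)·(n/(n−s))² · Σ_i Cov(μ*, N_i)² = (1/(n(n−1))) Σ_i (y_i − ȳ)²`. -/
theorem infinitesimal_jackknife_trivial_trees
    (n s : ℕ) (hs : 1 ≤ s) (hsn : s < n)
    (y : Fin n → ℝ) (ybar : ℝ) (hybar : ybar = (∑ i, y i) / n)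
    (𝒜 : Finset (Finset (Fin n))) (h𝒜 : 𝒜 = powersetCard s univ)
    (Epp : (Finset (Fin n) → ℝ) → ℝ)
    (hEpp : Epp = fun f => (∑ A ∈ 𝒜, f A) / (n.choose s : ℝ))
    (Cov : (Finset (Fin n) → ℝ) → (Finset (Fin n) → ℝ) → ℝ)
    (hCov : Cov = fun f g => Epp (fun A => f A * g A) - Epp f * Epp g)
    (μstar : Finset (Fin n) → ℝ) (hμstar : μstar = fun A => (∑ i ∈ A, y i) / s)
    (N : Fin n → Finset (Fin n) → ℝ)
    (hN : N = fun i A => if i ∈ A then 1 else 0) :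
    ((n : ℝ) - 1) / n * ((n : ℝ) / ((n : ℝ) - s)) ^ 2 * ∑ i, (Cov μstar (N i)) ^ 2
      = (1 / ((n : ℝ) * ((n : ℝ) - 1))) * ∑ i, (y i - ybar) ^ 2 := by
  subst hN hμstar hCov hEpp h𝒜 hybar
  beta_reduce
  have hn2 : 2 ≤ n := by omega
  have hn0 : (n : ℝ) ≠ 0 := by positivity
  have hs0 : (s : ℝ) ≠ 0 := by positivity
  have hn1 : (n : ℝ) - 1 ≠ 0 := by
    have : (2 : ℝ) ≤ n := by exact_mod_cast hn2
    linarith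
  have hns : (n : ℝ) - s ≠ 0 := by
    have : (s : ℝ) < n := by exact_mod_cast hsn
    linarith
  set c : ℝ := (n.choose s : ℝ) with hc
  have hc0 : c ≠ 0 := by
    rw [hc]
    exact_mod_cast (Nat.choose_pos hsn.le).ne'
  set c1 : ℝ := ((n - 1).choose (s - 1) : ℝ) with hc1def
  set p2 : ℝ := ((s : ℝ) - 1) * c1 / ((n : ℝ) - 1) with hp2
  -- basic identity n * c1 = s * c
  have hid : (n : ℝ) * c1 = s * c := by
    have hnat := Nat.add_one_mul_choose_eq (n - 1) (s - 1)
    rw [show n - 1 + 1 = n from by omega, show s - 1 + 1 = s from by omega] at hnat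
    have hcast : (n : ℝ) * ((n-1).choose (s-1) : ℝ) = ((n.choose s : ℕ) : ℝ) * (s : ℝ) := by
      exact_mod_cast hnat
    rw [hc1def, hc]
    linarith [hcast]
  have he1 : c1 = s * c / n := by
    rw [eq_div_iff hn0]; linarith [hid]
  -- single-element count
  have h1count : ∀ i : Fin n, (((powersetCard s (univ : Finset (Fin n))).filter
      (fun A => i ∈ A)).card : ℝ) = c1 := by
    intro i
    have h := IJ_count_one (univ : Finset (Fin n)) (s - 1) i (mem_univ i)
    rw [show s - 1 + 1 = s from by omega, card_univ, Fintype.card_fin] at h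
    rw [hc1def]
    exact_mod_cast h
  -- pair count
  have h2count : ∀ i j : Fin n, j ≠ i → (((powersetCard s (univ : Finset (Fin n))).filter
      (fun A => j ∈ A ∧ i ∈ A)).card : ℝ) = p2 := by
    intro i j hji
    rcases eq_or_lt_of_le hs with h1 | h2
    · have h := IJ_count_two_one (univ : Finset (Fin n)) j i hji
      rw [← h1]
      rw [h, hp2, ← h1]
      norm_num
    · have hs2 : 2 ≤ s := h2
      have h := IJ_count_two (univ : Finset (Fin n)) (s - 2) j i (mem_univ j) (mem_univ i) hji
      rw [show s - 2 + 2 = s from by omega, card_univ, Fintype.card_fin] at h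
      rw [h]
      have hnat := Nat.add_one_mul_choose_eq (n - 2) (s - 2)
      rw [show n - 2 + 1 = n - 1 from by omega, show s - 2 + 1 = s - 1 from by omega] at hnat
      have hcast : ((n - 1 : ℕ) : ℝ) * ((n-2).choose (s-2) : ℝ)
          = ((n-1).choose (s-1) : ℝ) * ((s - 1 : ℕ) : ℝ) := by exact_mod_cast hnat
      rw [Nat.cast_sub (show 1 ≤ n from by omega), Nat.cast_sub hs, Nat.cast_one] at hcast
      rw [hp2, hc1def, eq_div_iff hn1]
      linarith [hcast]
  -- sum lemmas
  have hS0 : ∀ i : Fin n, (∑ A ∈ powersetCard s (univ : Finset (Fin n)),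
      (if i ∈ A then (1:ℝ) else 0)) = c1 := by
    intro i
    rw [Finset.sum_boole]
    exact h1count i
  have hS1 : (∑ A ∈ powersetCard s (univ : Finset (Fin n)), ∑ j ∈ A, y j)
      = c1 * ∑ j, y j := by
    calc (∑ A ∈ powersetCard s (univ : Finset (Fin n)), ∑ j ∈ A, y j)
        = ∑ A ∈ powersetCard s (univ : Finset (Fin n)), ∑ j : Fin n,
            (if j ∈ A then y j else 0) := by
          refine sum_congr rfl fun A _ => ?_
          rw [sum_ite_mem, univ_inter]
      _ = ∑ j : Fin n, ∑ A ∈ powersetCard s (univ : Finset (Fin n)),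
            (if j ∈ A then y j else 0) := sum_comm
      _ = ∑ j : Fin n, y j * c1 := by
          refine sum_congr rfl fun j _ => ?_
          rw [show (fun A : Finset (Fin n) => if j ∈ A then y j else 0)
              = fun A => y j * (if j ∈ A then (1:ℝ) else 0) from by
            funext A; split <;> ring]
          rw [← mul_sum, hS0 j]
      _ = c1 * ∑ j, y j := by rw [← sum_mul]; ring
  have hS2 : ∀ i : Fin n, (∑ A ∈ powersetCard s (univ : Finset (Fin n)),
      (∑ j ∈ A, y j) * (if i ∈ A then (1:ℝ) else 0))
      = c1 * y i + p2 * ((∑ j, y j) - y i) := by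
    intro i
    have step1 : ∀ A ∈ powersetCard s (univ : Finset (Fin n)),
        (∑ j ∈ A, y j) * (if i ∈ A then (1:ℝ) else 0)
        = ∑ j : Fin n, y j * (if j ∈ A ∧ i ∈ A then (1:ℝ) else 0) := by
      intro A _
      rw [show (∑ j ∈ A, y j) = ∑ j : Fin n, (if j ∈ A then y j else 0) from by
        rw [sum_ite_mem, univ_inter], sum_mul]
      refine sum_congr rfl fun j _ => ?_
      by_cases h1 : j ∈ A <;> by_cases h2 : i ∈ A <;> simp [h1, h2]
    rw [sum_congr rfl step1, sum_comm]
    have inner : ∀ j : Fin n, (∑ A ∈ powersetCard s (univ : Finset (Fin n)),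
        y j * (if j ∈ A ∧ i ∈ A then (1:ℝ) else 0))
        = y j * (((powersetCard s (univ : Finset (Fin n))).filter
            (fun A => j ∈ A ∧ i ∈ A)).card : ℝ) := by
      intro j
      rw [← mul_sum, Finset.sum_boole]
    rw [sum_congr rfl (fun j _ => inner j),
      ← Finset.add_sum_erase _ _ (mem_univ i)]
    have fi : y i * (((powersetCard s (univ : Finset (Fin n))).filter
        (fun A => i ∈ A ∧ i ∈ A)).card : ℝ) = y i * c1 := by
      have hfeq : (powersetCard s (univ : Finset (Fin n))).filter (fun A => i ∈ A ∧ i ∈ A)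
          = (powersetCard s (univ : Finset (Fin n))).filter (fun A => i ∈ A) := by
        apply filter_congr
        intro A _
        simp
      rw [hfeq, h1count i]
    rw [fi, sum_congr rfl (fun j hj => by
      rw [h2count i j (mem_erase.1 hj).1, ← mul_comm p2 (y j)]),
      ← mul_sum, sum_erase_eq_sub (mem_univ i)]
    ring
  -- per-coordinate covariance value
  have hKey : ∀ i : Fin n,
      ((∑ A ∈ powersetCard s (univ : Finset (Fin n)),
          (∑ j ∈ A, y j) / s * (if i ∈ A then (1:ℝ) else 0)) / c
        - ((∑ A ∈ powersetCard s (univ : Finset (Fin n)), (∑ j ∈ A, y j) / s) / c)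
          * ((∑ A ∈ powersetCard s (univ : Finset (Fin n)),
              (if i ∈ A then (1:ℝ) else 0)) / c))
      = ((n:ℝ) - s) / ((n:ℝ) * ((n:ℝ) - 1)) * (y i - (∑ j, y j) / n) := by
    intro i
    have e2 : (∑ A ∈ powersetCard s (univ : Finset (Fin n)),
        (∑ j ∈ A, y j) / s * (if i ∈ A then (1:ℝ) else 0))
        = (c1 * y i + p2 * ((∑ j, y j) - y i)) / s := by
      rw [← hS2 i, sum_div]
      refine sum_congr rfl fun A _ => ?_
      ring
    have e3 : (∑ A ∈ powersetCard s (univ : Finset (Fin n)), (∑ j ∈ A, y j) / s)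
        = c1 * (∑ j, y j) / s := by
      rw [← hS1, sum_div]
    rw [e2, e3, hS0 i, hp2, he1]
    field_simp
    ring
  have hsum : (∑ i : Fin n,
      ((∑ A ∈ powersetCard s (univ : Finset (Fin n)),
          (∑ j ∈ A, y j) / s * (if i ∈ A then (1:ℝ) else 0)) / c
        - ((∑ A ∈ powersetCard s (univ : Finset (Fin n)), (∑ j ∈ A, y j) / s) / c)
          * ((∑ A ∈ powersetCard s (univ : Finset (Fin n)),
              (if i ∈ A then (1:ℝ) else 0)) / c)) ^ 2)
      = (((n:ℝ) - s) / ((n:ℝ) * ((n:ℝ) - 1))) ^ 2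
        * ∑ i, (y i - (∑ j, y j) / n) ^ 2 := by
    rw [mul_sum]
    exact sum_congr rfl fun i _ => by rw [hKey i, mul_pow]
  rw [hsum]
  field_simp
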